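/- Suppose ν is even, P = Pᵀ, and C is symmetric positive definite. Define A_{ν/2,ν/2}(z) := (P^{ν/2} ⊗ I_n) x⋆((P^{ν/2} ⊗ I_n) z). Let (α_k)_{k≥1} satisfy α_k ∈ (0,1) for all k, lim_{k→∞} α_k = 0 and Σ_{k=1}^∞ α_k = ∞. Then for any initial vector z_0 ∈ ℝ^{Nn}, the Mann iteration z_{k+1} := (1−α_k) z_k + α_k A_{ν/2,ν/2}(z_k) is such that the sequence a_k := (P^{ν/2} ⊗ I_n) z_k converges as k → ∞ to a fixed point of A_ν. (Theorem 3, statement 4.) -/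

import Mathlib

open Matrix Filter Topology Finset
open scoped Kronecker

noncomputable section

/-- Euclidean norm of a finitely-indexed real vector. -/
def eunorm {ι : Type*} [Fintype ι] (x : ι → ℝ) : ℝ := Real.sqrt (x ⬝ᵥ x)

/-- `S`-weighted norm `‖x‖_S = √(xᵀ S x)`. -/
def wnorm {ι : Type*} [Fintype ι] (S : Matrix ι ι ℝ) (x : ι → ℝ) : ℝ :=
  Real.sqrt (x ⬝ᵥ S.mulVec x)

/-- Quadratic cost `J(x,z) = q·xᵀQx + 2(Cz+c)ᵀx`. -/
def cost {n : ℕ} (Q C : Matrix (Fin n) (Fin n) ℝ) (qi : ℝ) (ci : Fin n → ℝ)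
    (x z : Fin n → ℝ) : ℝ :=
  qi * (x ⬝ᵥ Q.mulVec x) + 2 * ((C.mulVec z + ci) ⬝ᵥ x)

/-- `xst` is the optimal-response map: for every `z`, `xst z` minimizes the cost over `X`. -/
def IsOptResp {n : ℕ} (X : Set (Fin n → ℝ)) (Q C : Matrix (Fin n) (Fin n) ℝ)
    (qi : ℝ) (ci : Fin n → ℝ) (xst : (Fin n → ℝ) → (Fin n → ℝ)) : Prop :=
  ∀ z, xst z ∈ X ∧ ∀ y ∈ X, cost Q C qi ci (xst z) z ≤ cost Q C qi ci y z

/-- Stacked optimal responses `x⋆(z) = (x^{1⋆}(z^1);…;x^{N⋆}(z^N))`. -/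
def extMap {n N : ℕ} (xstar : Fin N → (Fin n → ℝ) → (Fin n → ℝ))
    (z : Fin N × Fin n → ℝ) : Fin N × Fin n → ℝ :=
  fun p => xstar p.1 (fun j => z (p.1, j)) p.2

/-- Extended aggregation map `A_ν(z) = (P^ν ⊗ I_n) x⋆(z)`. -/
def aggMap {n N : ℕ} (P : Matrix (Fin N) (Fin N) ℝ) (ν : ℕ)
    (xstar : Fin N → (Fin n → ℝ) → (Fin n → ℝ)) (z : Fin N × Fin n → ℝ) :
    Fin N × Fin n → ℝ :=
  ((P ^ ν) ⊗ₖ (1 : Matrix (Fin n) (Fin n) ℝ)).mulVec (extMap xstar z)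

/-- The matrix `(1/N)·1_N 1_Nᵀ` with all entries `1/N`. -/
def avgMat (N : ℕ) : Matrix (Fin N) (Fin N) ℝ := Matrix.of fun _ _ => (N : ℝ)⁻¹

/-- Mean-field aggregation map `A(z) = ((1/N)·1 1ᵀ ⊗ I_n) x⋆(z)`. -/
def meanAgg {n N : ℕ} (xstar : Fin N → (Fin n → ℝ) → (Fin n → ℝ))
    (z : Fin N × Fin n → ℝ) : Fin N × Fin n → ℝ :=
  ((avgMat N) ⊗ₖ (1 : Matrix (Fin n) (Fin n) ℝ)).mulVec (extMap xstar z)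

/-- Maximum-row-sum matrix norm `‖A‖_∞`. -/
def rowSumNorm {N : ℕ} (A : Matrix (Fin N) (Fin N) ℝ) : ℝ := ⨆ i, ∑ j, |A i j|

/-- Spectral norm (ℓ²-operator norm) of a real matrix. -/
def specNorm {ι : Type*} [Fintype ι] [DecidableEq ι] (P : Matrix ι ι ℝ) : ℝ :=
  ‖LinearMap.toContinuousLinearMap (Matrix.toEuclideanLin P)‖

/-- Map `A_{m,m}(z) = (P^m ⊗ I_n) x⋆((P^m ⊗ I_n) z)`. -/
def halfAgg {n N : ℕ} (P : Matrix (Fin N) (Fin N) ℝ) (m : ℕ)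
    (xstar : Fin N → (Fin n → ℝ) → (Fin n → ℝ)) (z : Fin N × Fin n → ℝ) :
    Fin N × Fin n → ℝ :=
  ((P ^ m) ⊗ₖ (1 : Matrix (Fin n) (Fin n) ℝ)).mulVec
    (extMap xstar (((P ^ m) ⊗ₖ (1 : Matrix (Fin n) (Fin n) ℝ)).mulVec z))

/-! ### Auxiliary lemmas -/

section MannAux

/-- squared pi-norm vs dot product -/
lemma mann_norm_sq_le_dot {ι : Type*} [Fintype ι] (v : ι → ℝ) : ‖v‖ ^ 2 ≤ v ⬝ᵥ v := by
  have h0 : (0:ℝ) ≤ v ⬝ᵥ v := Finset.sum_nonneg fun i _ => mul_self_nonneg _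
  have h1 : ‖v‖ ≤ Real.sqrt (v ⬝ᵥ v) := by
    refine pi_norm_le_iff_of_nonneg (Real.sqrt_nonneg _) |>.mpr fun i => ?_
    have : v i * v i ≤ v ⬝ᵥ v :=
      Finset.single_le_sum (fun j _ => mul_self_nonneg (v j)) (Finset.mem_univ i)
    calc ‖v i‖ = Real.sqrt (v i * v i) := by
          rw [Real.sqrt_mul_self_eq_abs]; rfl
      _ ≤ _ := Real.sqrt_le_sqrt this
  calc ‖v‖ ^ 2 ≤ Real.sqrt (v ⬝ᵥ v) ^ 2 := by
        exact pow_le_pow_left₀ (norm_nonneg _) h1 2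
    _ = v ⬝ᵥ v := Real.sq_sqrt h0

lemma mann_dot_le_card_norm_sq {ι : Type*} [Fintype ι] (v : ι → ℝ) :
    v ⬝ᵥ v ≤ (Fintype.card ι : ℝ) * ‖v‖ ^ 2 := by
  calc v ⬝ᵥ v ≤ ∑ _i : ι, ‖v‖ ^ 2 := by
        refine Finset.sum_le_sum fun i _ => ?_
        have := norm_le_pi_norm v i
        calc v i * v i = ‖v i‖ ^ 2 := by rw [Real.norm_eq_abs, sq_abs]; ring
          _ ≤ ‖v‖ ^ 2 := pow_le_pow_left₀ (norm_nonneg _) this 2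
    _ = (Fintype.card ι : ℝ) * ‖v‖ ^ 2 := by
        rw [Finset.sum_const, Finset.card_univ, nsmul_eq_mul]

lemma mann_dot_self_nonneg {ι : Type*} [Fintype ι] (v : ι → ℝ) : 0 ≤ v ⬝ᵥ v :=
  Finset.sum_nonneg fun i _ => mul_self_nonneg _

lemma mann_quad_scale {k : ℕ} (A : Matrix (Fin k) (Fin k) ℝ) (c : ℝ) (v : Fin k → ℝ) :
    (c • v) ⬝ᵥ A.mulVec (c • v) = c ^ 2 * (v ⬝ᵥ A.mulVec v) := by
  rw [Matrix.mulVec_smul, smul_dotProduct, dotProduct_smul]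
  simp [smul_eq_mul]; ring

/-- two-sided quadratic form bounds for a positive definite matrix -/
lemma mann_quad_bounds {k : ℕ} (hk : 0 < k) (A : Matrix (Fin k) (Fin k) ℝ) (hA : A.PosDef) :
    ∃ a b : ℝ, 0 < a ∧ (∀ v, a * (v ⬝ᵥ v) ≤ v ⬝ᵥ A.mulVec v) ∧
      (∀ v, v ⬝ᵥ A.mulVec v ≤ b * (v ⬝ᵥ v)) := by
  haveI : Nonempty (Fin k) := ⟨⟨0, hk⟩⟩
  set f : (Fin k → ℝ) → ℝ := fun v => v ⬝ᵥ A.mulVec v with hf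
  have hcont : Continuous f := by
    simp only [hf, Matrix.mulVec, dotProduct]
    exact continuous_finset_sum _ fun i _ => (continuous_apply i).mul <|
      continuous_finset_sum _ fun j _ => continuous_const.mul (continuous_apply j)
  have hsne : (Metric.sphere (0 : Fin k → ℝ) 1).Nonempty :=
    NormedSpace.sphere_nonempty.mpr zero_le_one
  obtain ⟨u, hu, hmin'⟩ := (isCompact_sphere (0 : Fin k → ℝ) 1).exists_isMinOn hsne
    hcont.continuousOn
  obtain ⟨w, hw, hmax'⟩ := (isCompact_sphere (0 : Fin k → ℝ) 1).exists_isMaxOn hsne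
    hcont.continuousOn
  have hmin : ∀ y ∈ Metric.sphere (0 : Fin k → ℝ) 1, f u ≤ f y := fun y hy => hmin' hy
  have hmax : ∀ y ∈ Metric.sphere (0 : Fin k → ℝ) 1, f y ≤ f w := fun y hy => hmax' hy
  have hu0 : u ≠ 0 := by
    intro h; rw [Metric.mem_sphere, dist_zero_right, h, norm_zero] at hu; norm_num at hu
  have hfu : 0 < f u := by simpa using hA.dotProduct_mulVec_pos hu0
  have key : ∀ v : Fin k → ℝ, v ≠ 0 → f v = ‖v‖ ^ 2 * f (‖v‖⁻¹ • v) ∧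
      (‖v‖⁻¹ • v) ∈ Metric.sphere (0 : Fin k → ℝ) 1 := by
    intro v hv
    have hnv : ‖v‖ ≠ 0 := norm_ne_zero_iff.mpr hv
    constructor
    · show v ⬝ᵥ A.mulVec v = ‖v‖ ^ 2 * ((‖v‖⁻¹ • v) ⬝ᵥ A.mulVec (‖v‖⁻¹ • v))
      rw [mann_quad_scale A (‖v‖⁻¹) v]
      field_simp
    · rw [Metric.mem_sphere, dist_zero_right, norm_smul, norm_inv, norm_norm]
      field_simp
  refine ⟨f u / (Fintype.card (Fin k) : ℝ), f w, by positivity, ?_, ?_⟩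
  · intro v
    rcases eq_or_ne v 0 with rfl | hv
    · simp
    obtain ⟨hsc, hmem⟩ := key v hv
    have h1 : f u ≤ f (‖v‖⁻¹ • v) := hmin _ hmem
    have h2 : v ⬝ᵥ v ≤ (Fintype.card (Fin k) : ℝ) * ‖v‖ ^ 2 := mann_dot_le_card_norm_sq v
    have hcard : (0:ℝ) < (Fintype.card (Fin k) : ℝ) := by
      simp [Fintype.card_fin]; exact hk
    calc f u / (Fintype.card (Fin k) : ℝ) * (v ⬝ᵥ v)
        ≤ f u / (Fintype.card (Fin k) : ℝ) * ((Fintype.card (Fin k) : ℝ) * ‖v‖ ^ 2) := by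
          apply mul_le_mul_of_nonneg_left h2 (by positivity)
      _ = ‖v‖ ^ 2 * f u := by field_simp
      _ ≤ ‖v‖ ^ 2 * f (‖v‖⁻¹ • v) := by
          apply mul_le_mul_of_nonneg_left h1 (by positivity)
      _ = f v := hsc.symm
  · intro v
    rcases eq_or_ne v 0 with rfl | hv
    · simp
    obtain ⟨hsc, hmem⟩ := key v hv
    have h1 : f (‖v‖⁻¹ • v) ≤ f w := hmax _ hmem
    have h2 : ‖v‖ ^ 2 ≤ v ⬝ᵥ v := mann_norm_sq_le_dot v
    have hw0 : w ≠ 0 := by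
      intro h; rw [Metric.mem_sphere, dist_zero_right, h, norm_zero] at hw; norm_num at hw
    have hfw : 0 ≤ f w := le_of_lt (by simpa using hA.dotProduct_mulVec_pos hw0)
    calc f v = ‖v‖ ^ 2 * f (‖v‖⁻¹ • v) := hsc
      _ ≤ ‖v‖ ^ 2 * f w := mul_le_mul_of_nonneg_left h1 (by positivity)
      _ ≤ (v ⬝ᵥ v) * f w := mul_le_mul_of_nonneg_right h2 hfw
      _ = f w * (v ⬝ᵥ v) := mul_comm _ _

/-- Block operator `(S ⊗ I) v`. -/
def Kop {N n : ℕ} (S : Matrix (Fin N) (Fin N) ℝ) (v : Fin N × Fin n → ℝ) :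
    Fin N × Fin n → ℝ := fun p => ∑ j, S p.1 j * v (j, p.2)

/-- Block operator `(I ⊗ R) v`. -/
def Rop {N n : ℕ} (R : Matrix (Fin n) (Fin n) ℝ) (v : Fin N × Fin n → ℝ) :
    Fin N × Fin n → ℝ := fun p => ∑ a, R p.2 a * v (p.1, a)

lemma kron_one_mulVec {N n : ℕ} (S : Matrix (Fin N) (Fin N) ℝ) (v : Fin N × Fin n → ℝ) :
    ((S ⊗ₖ (1 : Matrix (Fin n) (Fin n) ℝ)).mulVec v) = Kop S v := by
  funext p
  cases p with
  | mk i a =>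
    simp only [Matrix.mulVec, dotProduct, Fintype.sum_prod_type,
      Matrix.kroneckerMap_apply, Matrix.one_apply, Kop]
    refine Finset.sum_congr rfl fun j _ => ?_
    rw [Finset.sum_eq_single a]
    · simp
    · intro b _ hb; simp [hb.symm]
    · simp

lemma Kop_sub {N n : ℕ} (S : Matrix (Fin N) (Fin N) ℝ) (u v : Fin N × Fin n → ℝ) :
    Kop S (u - v) = Kop S u - Kop S v := by
  funext p; simp [Kop, mul_sub, Finset.sum_sub_distrib]

lemma Rop_sub {N n : ℕ} (R : Matrix (Fin n) (Fin n) ℝ) (u v : Fin N × Fin n → ℝ) :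
    Rop R (u - v) = Rop R u - Rop R v := by
  funext p; simp [Rop, mul_sub, Finset.sum_sub_distrib]

lemma Rop_add {N n : ℕ} (R : Matrix (Fin n) (Fin n) ℝ) (u v : Fin N × Fin n → ℝ) :
    Rop R (u + v) = Rop R u + Rop R v := by
  funext p; simp [Rop, mul_add, Finset.sum_add_distrib]

lemma Rop_smul {N n : ℕ} (R : Matrix (Fin n) (Fin n) ℝ) (c : ℝ) (u : Fin N × Fin n → ℝ) :
    Rop R (c • u) = c • Rop R u := by
  funext p; simp [Rop, Finset.mul_sum]
  refine Finset.sum_congr rfl fun a _ => by ring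

lemma Rop_Kop_comm {N n : ℕ} (R : Matrix (Fin n) (Fin n) ℝ) (S : Matrix (Fin N) (Fin N) ℝ)
    (v : Fin N × Fin n → ℝ) : Rop R (Kop S v) = Kop S (Rop R v) := by
  funext p
  simp only [Rop, Kop, Finset.mul_sum]
  rw [Finset.sum_comm]
  refine Finset.sum_congr rfl fun j _ => Finset.sum_congr rfl fun a _ => by ring

lemma Kop_dot_adj {N n : ℕ} (S : Matrix (Fin N) (Fin N) ℝ)
    (hsym : Sᵀ = S) (u v : Fin N × Fin n → ℝ) :
    Kop S u ⬝ᵥ v = u ⬝ᵥ Kop S v := by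
  rw [← kron_one_mulVec, ← kron_one_mulVec]
  have hM : (S ⊗ₖ (1 : Matrix (Fin n) (Fin n) ℝ))ᵀ = S ⊗ₖ (1 : Matrix (Fin n) (Fin n) ℝ) := by
    rw [← Matrix.kroneckerMap_transpose, hsym, Matrix.transpose_one]
  set M := S ⊗ₖ (1 : Matrix (Fin n) (Fin n) ℝ) with hMdef
  calc (M *ᵥ u) ⬝ᵥ v = v ⬝ᵥ (M *ᵥ u) := dotProduct_comm _ _
    _ = (v ᵥ* M) ⬝ᵥ u := Matrix.dotProduct_mulVec _ _ _
    _ = (M *ᵥ v) ⬝ᵥ u := by rw [← Matrix.vecMul_transpose, hM]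
    _ = u ⬝ᵥ (M *ᵥ v) := dotProduct_comm _ _

lemma Kop_dot_self_le {N n : ℕ} (S : Matrix (Fin N) (Fin N) ℝ)
    (hnn : ∀ i j, 0 ≤ S i j) (hrow : ∀ i, ∑ j, S i j = 1) (hcol : ∀ j, ∑ i, S i j = 1)
    (v : Fin N × Fin n → ℝ) : Kop S v ⬝ᵥ Kop S v ≤ v ⬝ᵥ v := by
  simp only [dotProduct, Kop, Fintype.sum_prod_type]
  have key : ∀ (i : Fin N) (a : Fin n),
      (∑ j, S i j * v (j, a)) * (∑ j, S i j * v (j, a)) ≤ ∑ j, S i j * (v (j, a))^2 := by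
    intro i a
    have cs := Finset.sum_mul_sq_le_sq_mul_sq Finset.univ
      (fun j => Real.sqrt (S i j)) (fun j => Real.sqrt (S i j) * v (j, a))
    have h1 : ∀ j, Real.sqrt (S i j) * (Real.sqrt (S i j) * v (j, a)) = S i j * v (j, a) := by
      intro j; rw [← mul_assoc, Real.mul_self_sqrt (hnn i j)]
    have h2 : ∀ j, Real.sqrt (S i j) ^ 2 = S i j := fun j => Real.sq_sqrt (hnn i j)
    have h3 : ∀ j, (Real.sqrt (S i j) * v (j, a)) ^ 2 = S i j * (v (j, a))^2 := by
      intro j; rw [mul_pow, h2]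
    simp only [h1, h2, h3, hrow i, one_mul] at cs
    calc (∑ j, S i j * v (j, a)) * (∑ j, S i j * v (j, a))
        = (∑ j, S i j * v (j, a)) ^ 2 := (sq _).symm
      _ ≤ ∑ j, S i j * (v (j, a))^2 := cs
  calc ∑ i, ∑ a, (∑ j, S i j * v (j, a)) * (∑ j, S i j * v (j, a))
      ≤ ∑ i, ∑ a, ∑ j, S i j * (v (j, a))^2 :=
        Finset.sum_le_sum fun i _ => Finset.sum_le_sum fun a _ => key i a
    _ = ∑ i, ∑ j, ∑ a, S i j * (v (j, a))^2 := by
        refine Finset.sum_congr rfl fun i _ => ?_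
        exact Finset.sum_comm
    _ = ∑ j, ∑ i, ∑ a, S i j * (v (j, a))^2 := Finset.sum_comm
    _ = ∑ j, ∑ a, v (j, a) * v (j, a) := by
        refine Finset.sum_congr rfl fun j _ => ?_
        rw [Finset.sum_comm]
        refine Finset.sum_congr rfl fun a _ => ?_
        rw [← Finset.sum_mul, hcol j, one_mul, sq]

lemma mann_sqrt_dot {n : ℕ} (R C : Matrix (Fin n) (Fin n) ℝ) (hRsym : Rᵀ = R)
    (hRR : R * R = C) (x y : Fin n → ℝ) :
    (R.mulVec x) ⬝ᵥ (R.mulVec y) = x ⬝ᵥ C.mulVec y := by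
  rw [Matrix.dotProduct_mulVec, Matrix.vecMul_mulVec, hRsym, hRR, ← Matrix.dotProduct_mulVec]

lemma Rop_dot {N n : ℕ} (R : Matrix (Fin n) (Fin n) ℝ) (u v : Fin N × Fin n → ℝ) :
    Rop R u ⬝ᵥ Rop R v
      = ∑ i, (R.mulVec (fun a => u (i,a))) ⬝ᵥ (R.mulVec (fun a => v (i,a))) := by
  simp only [dotProduct, Rop, Fintype.sum_prod_type, Matrix.mulVec]

lemma mann_dot_blocks {N n : ℕ} (u v : Fin N × Fin n → ℝ) :
    u ⬝ᵥ v = ∑ i, (fun a => u (i,a)) ⬝ᵥ (fun a => v (i,a)) := by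
  simp only [dotProduct, Fintype.sum_prod_type]

lemma pow_entries_nonneg {N : ℕ} (P : Matrix (Fin N) (Fin N) ℝ)
    (hP : ∀ i j, 0 ≤ P i j) (m : ℕ) : ∀ i j, 0 ≤ (P ^ m) i j := by
  induction m with
  | zero => intro i j; simp [Matrix.one_apply]; split <;> norm_num
  | succ m ih =>
    intro i j
    rw [pow_succ, Matrix.mul_apply]
    exact Finset.sum_nonneg fun l _ => mul_nonneg (ih i l) (hP l j)

lemma pow_row_sum {N : ℕ} (P : Matrix (Fin N) (Fin N) ℝ)
    (hP : ∀ i, ∑ j, P i j = 1) (m : ℕ) : ∀ i, ∑ j, (P ^ m) i j = 1 := by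
  induction m with
  | zero => intro i; simp [Matrix.one_apply]
  | succ m ih =>
    intro i
    simp only [pow_succ, Matrix.mul_apply]
    rw [Finset.sum_comm]
    calc ∑ l, ∑ j, (P ^ m) i l * P l j = ∑ l, (P ^ m) i l * ∑ j, P l j := by
          refine Finset.sum_congr rfl fun l _ => (Finset.mul_sum _ _ _).symm
      _ = 1 := by simp only [hP, mul_one]; exact ih i

/-- From `0 ≤ 2*L + t*M` for all `t ∈ (0,1]`, with `0 ≤ M`, conclude `0 ≤ L`. -/
lemma nonneg_of_forall_small (L M : ℝ) (hM : 0 ≤ M)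
    (h : ∀ t : ℝ, 0 < t → t ≤ 1 → 0 ≤ 2 * L + t * M) : 0 ≤ L := by
  by_contra hL
  push_neg at hL
  have hM1 : (0:ℝ) < M + 1 := by linarith
  set t := min 1 (-L / (M + 1)) with ht
  have htpos : 0 < t := lt_min one_pos (div_pos (by linarith) hM1)
  have ht1 : t ≤ 1 := min_le_left _ _
  have htM : t * M ≤ -L := by
    calc t * M ≤ (-L / (M + 1)) * M :=
          mul_le_mul_of_nonneg_right (min_le_right _ _) hM
      _ ≤ -L := by
          rw [div_mul_eq_mul_div, div_le_iff₀ hM1]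
          nlinarith
  have := h t htpos ht1
  linarith

lemma mann_dot_mulVec_symm {n : ℕ} {Q : Matrix (Fin n) (Fin n) ℝ} (hQsym : Qᵀ = Q)
    (x d : Fin n → ℝ) : d ⬝ᵥ Q.mulVec x = x ⬝ᵥ Q.mulVec d := by
  rw [Matrix.dotProduct_mulVec, ← Matrix.vecMul_transpose, hQsym, dotProduct_comm]

/-- Variational inequality for the optimal response. -/
lemma optResp_VI {n : ℕ} (X : Set (Fin n → ℝ)) (hXconv : Convex ℝ X)
    (Q C : Matrix (Fin n) (Fin n) ℝ) (hQsym : Qᵀ = Q)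
    (hQpsd : ∀ v : Fin n → ℝ, 0 ≤ v ⬝ᵥ Q.mulVec v)
    (qi : ℝ) (hqi : 0 < qi) (ci : Fin n → ℝ)
    (xst : (Fin n → ℝ) → (Fin n → ℝ)) (hopt : IsOptResp X Q C qi ci xst)
    (z : Fin n → ℝ) {y : Fin n → ℝ} (hy : y ∈ X) :
    0 ≤ qi * (xst z ⬝ᵥ Q.mulVec (y - xst z)) + (C.mulVec z + ci) ⬝ᵥ (y - xst z) := by
  set x := xst z with hx
  set d := y - x with hd
  apply nonneg_of_forall_small _ (qi * (d ⬝ᵥ Q.mulVec d)) (mul_nonneg (le_of_lt hqi) (hQpsd d))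
  intro t ht0 ht1
  have hmem : x + t • d ∈ X := by
    have h2 : (1 - t) • x + t • y ∈ X :=
      hXconv (hopt z).1 hy (by linarith) (le_of_lt ht0) (by ring)
    have : x + t • d = (1 - t) • x + t • y := by
      rw [hd, smul_sub, sub_smul, one_smul]; abel
    rwa [this]
  have hle := (hopt z).2 _ hmem
  have hexp : cost Q C qi ci (x + t • d) z - cost Q C qi ci x z
      = t * (2 * (qi * (x ⬝ᵥ Q.mulVec d) + (C.mulVec z + ci) ⬝ᵥ d))
        + t ^ 2 * (qi * (d ⬝ᵥ Q.mulVec d)) := by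
    have hsymm : d ⬝ᵥ Q.mulVec x = x ⬝ᵥ Q.mulVec d := mann_dot_mulVec_symm hQsym x d
    simp only [cost, Matrix.mulVec_add, Matrix.mulVec_smul, dotProduct_add,
      add_dotProduct, dotProduct_smul, smul_dotProduct, smul_eq_mul]
    rw [hsymm]; ring
  have h0 : 0 ≤ t * (2 * (qi * (x ⬝ᵥ Q.mulVec d) + (C.mulVec z + ci) ⬝ᵥ d))
      + t ^ 2 * (qi * (d ⬝ᵥ Q.mulVec d)) := by rw [← hexp]; linarith
  nlinarith [h0, ht0]

lemma optResp_monotone {n : ℕ} (X : Set (Fin n → ℝ)) (hXconv : Convex ℝ X)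
    (Q C : Matrix (Fin n) (Fin n) ℝ) (hQsym : Qᵀ = Q)
    (hQpsd : ∀ v : Fin n → ℝ, 0 ≤ v ⬝ᵥ Q.mulVec v)
    (qi : ℝ) (hqi : 0 < qi) (ci : Fin n → ℝ)
    (xst : (Fin n → ℝ) → (Fin n → ℝ)) (hopt : IsOptResp X Q C qi ci xst)
    (w1 w2 : Fin n → ℝ) :
    (xst w1 - xst w2) ⬝ᵥ C.mulVec (w1 - w2)
      ≤ -(qi * ((xst w1 - xst w2) ⬝ᵥ Q.mulVec (xst w1 - xst w2))) := by
  have VI1 := optResp_VI X hXconv Q C hQsym hQpsd qi hqi ci xst hopt w1 (hopt w2).1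
  have VI2 := optResp_VI X hXconv Q C hQsym hQpsd qi hqi ci xst hopt w2 (hopt w1).1
  set x1 := xst w1
  set x2 := xst w2
  have hq : x2 ⬝ᵥ Q.mulVec x1 = x1 ⬝ᵥ Q.mulVec x2 := mann_dot_mulVec_symm hQsym x1 x2
  have hc1 : C.mulVec w1 ⬝ᵥ x1 = x1 ⬝ᵥ C.mulVec w1 := dotProduct_comm _ _
  have hc2 : C.mulVec w1 ⬝ᵥ x2 = x2 ⬝ᵥ C.mulVec w1 := dotProduct_comm _ _
  have hc3 : C.mulVec w2 ⬝ᵥ x1 = x1 ⬝ᵥ C.mulVec w2 := dotProduct_comm _ _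
  have hc4 : C.mulVec w2 ⬝ᵥ x2 = x2 ⬝ᵥ C.mulVec w2 := dotProduct_comm _ _
  have hq2 : qi * (x2 ⬝ᵥ Q.mulVec x1) = qi * (x1 ⬝ᵥ Q.mulVec x2) := by rw [hq]
  simp only [Matrix.mulVec_sub, dotProduct_sub, sub_dotProduct,
    add_dotProduct, mul_sub, mul_add] at VI1 VI2 ⊢
  linarith [VI1, VI2, hq2, hc1, hc2, hc3, hc4]

/-- key quadratic contraction step on plain dot products -/
lemma mann_contract_step {ι : Type*} [Fintype ι] (u w : ι → ℝ) (t δ : ℝ)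
    (ht0 : 0 ≤ t) (ht1 : t ≤ 1) (hδ : 0 ≤ δ) (htc : t ≤ 2 * (1 - t) * δ)
    (hdis : w ⬝ᵥ u ≤ -(δ * (w ⬝ᵥ w))) :
    ((1 - t) • u + t • w) ⬝ᵥ ((1 - t) • u + t • w) ≤ (1 - t) ^ 2 * (u ⬝ᵥ u) := by
  have hww : 0 ≤ w ⬝ᵥ w := mann_dot_self_nonneg w
  have hcomm : u ⬝ᵥ w = w ⬝ᵥ u := dotProduct_comm _ _
  have expand : ((1 - t) • u + t • w) ⬝ᵥ ((1 - t) • u + t • w)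
      = (1 - t) ^ 2 * (u ⬝ᵥ u) + 2 * ((1 - t) * t) * (w ⬝ᵥ u) + t ^ 2 * (w ⬝ᵥ w) := by
    simp only [add_dotProduct, dotProduct_add, smul_dotProduct,
      dotProduct_smul, smul_eq_mul]
    rw [hcomm]; ring
  rw [expand]
  have hnn : 0 ≤ 2 * ((1 - t) * t) := by nlinarith
  have h1 : 2 * ((1 - t) * t) * (w ⬝ᵥ u) ≤ 2 * ((1 - t) * t) * (-(δ * (w ⬝ᵥ w))) :=
    mul_le_mul_of_nonneg_left hdis hnn
  have h2 : t * t ≤ 2 * (1 - t) * δ * t := mul_le_mul_of_nonneg_right htc ht0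
  have h3 : (t * t) * (w ⬝ᵥ w) ≤ (2 * (1 - t) * δ * t) * (w ⬝ᵥ w) :=
    mul_le_mul_of_nonneg_right h2 hww
  nlinarith [h1, h3]

end MannAux

set_option maxHeartbeats 1000000 in
/-- Theorem 3, case 4: if `ν` is even, `P = Pᵀ` and `C ≻ 0`, then the Mann
iteration of `A_{ν/2,ν/2}` produces estimates `(P^{ν/2} ⊗ I_n) z_k` converging to a fixed
point of `A_ν`. -/
theorem mann_halfAgg_converges {n N ν : ℕ} (hn : 0 < n) (hN : 0 < N) (hν : 0 < ν)
    (hνeven : Even ν)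
    (X : Fin N → Set (Fin n → ℝ))
    (hXne : ∀ i, (X i).Nonempty) (hXconv : ∀ i, Convex ℝ (X i))
    (hXcpt : ∀ i, IsCompact (X i))
    (Q C : Matrix (Fin n) (Fin n) ℝ) (hQ : Q.PosDef)
    (q : Fin N → ℝ) (hq : ∀ i, 0 < q i) (c : Fin N → Fin n → ℝ)
    (P : Matrix (Fin N) (Fin N) ℝ) (hPnn : ∀ i j, 0 ≤ P i j)
    (hPrs : ∀ i, ∑ j, P i j = 1) (hPsym : P.IsSymm)
    (hC : C.PosDef)
    (α : ℕ → ℝ) (hα1 : ∀ k, 0 < α k ∧ α k < 1)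
    (hα2 : Tendsto α atTop (𝓝 0))
    (hα3 : Tendsto (fun K => ∑ k ∈ Finset.range K, α k) atTop atTop)
    (xstar : Fin N → (Fin n → ℝ) → (Fin n → ℝ))
    (hxstar : ∀ i, IsOptResp (X i) Q C (q i) (c i) (xstar i))
    (zseq : ℕ → (Fin N × Fin n → ℝ))
    (hrec : ∀ k, zseq (k + 1) =
      (1 - α k) • zseq k + α k • halfAgg P (ν / 2) xstar (zseq k)) :
    ∃ a : Fin N × Fin n → ℝ,
      aggMap P ν xstar a = a ∧
      Tendsto
        (fun k => ((P ^ (ν / 2)) ⊗ₖ (1 : Matrix (Fin n) (Fin n) ℝ)).mulVec (zseq k))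
        atTop (𝓝 a) := by
  classical
  haveI : Nonempty (Fin N) := ⟨⟨0, hN⟩⟩
  -- symmetry facts
  have hQsym : Qᵀ = Q := by
    have h := hQ.isHermitian
    rwa [Matrix.IsHermitian, Matrix.conjTranspose_eq_transpose_of_trivial] at h
  have hQpsd : ∀ v : Fin n → ℝ, 0 ≤ v ⬝ᵥ Q.mulVec v := by
    intro v
    rcases eq_or_ne v 0 with rfl | hv
    · simp
    · exact le_of_lt (by simpa using hQ.dotProduct_mulVec_pos hv)
  -- square root of C
  obtain ⟨R, hRR, hRsym⟩ : ∃ R : Matrix (Fin n) (Fin n) ℝ, R * R = C ∧ Rᵀ = R := by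
    open scoped MatrixOrder in
    exact ⟨CFC.sqrt C, CFC.sqrt_mul_sqrt_self C (Matrix.nonneg_iff_posSemidef.mpr hC.posSemidef),
      by
        have h := (Matrix.nonneg_iff_posSemidef.mp (CFC.sqrt_nonneg C)).1
        rwa [Matrix.IsHermitian, Matrix.conjTranspose_eq_transpose_of_trivial] at h⟩
  -- stochastic powers
  set m := ν / 2 with hmdef
  set S := P ^ m with hSdef
  have hSnn : ∀ i j, 0 ≤ S i j := pow_entries_nonneg P hPnn m
  have hSrow : ∀ i, ∑ j, S i j = 1 := pow_row_sum P hPrs m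
  have hSsym : Sᵀ = S := Matrix.IsSymm.pow hPsym m
  have hSapp : ∀ i j, S i j = S j i := fun i j => by
    have h := congrFun (congrFun hSsym j) i
    rwa [Matrix.transpose_apply] at h
  have hScol : ∀ j, ∑ i, S i j = 1 := by
    intro j
    calc ∑ i, S i j = ∑ i, S j i := Finset.sum_congr rfl fun i _ => hSapp i j
      _ = 1 := hSrow j
  -- quadratic bounds
  obtain ⟨aC, bC, haC, hlowC, hupC⟩ := mann_quad_bounds hn C hC
  obtain ⟨aQ, bQ, haQ, hlowQ, -⟩ := mann_quad_bounds hn Q hQ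
  have hone : (0:ℝ) < (fun _ : Fin n => (1:ℝ)) ⬝ᵥ (fun _ => (1:ℝ)) := by
    simp only [dotProduct, mul_one, Finset.sum_const, Finset.card_univ,
      Fintype.card_fin, nsmul_eq_mul]
    exact_mod_cast hn
  have hbC : 0 < bC := by
    nlinarith [hlowC (fun _ => (1:ℝ)), hupC (fun _ => (1:ℝ))]
  obtain ⟨i0, hi0⟩ := Finite.exists_min q
  set δ := (q i0 * aQ) / bC with hδdef
  have hδ : 0 < δ := div_pos (mul_pos (hq i0) haQ) hbC
  have hδkey : ∀ (i : Fin N) (v : Fin n → ℝ),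
      δ * (v ⬝ᵥ C.mulVec v) ≤ q i * (v ⬝ᵥ Q.mulVec v) := by
    intro i v
    have h1 : δ * (v ⬝ᵥ C.mulVec v) ≤ δ * (bC * (v ⬝ᵥ v)) :=
      mul_le_mul_of_nonneg_left (hupC v) (le_of_lt hδ)
    have h2 : δ * (bC * (v ⬝ᵥ v)) = q i0 * (aQ * (v ⬝ᵥ v)) := by
      rw [hδdef]; field_simp
    have h3 : q i0 * (aQ * (v ⬝ᵥ v)) ≤ q i0 * (v ⬝ᵥ Q.mulVec v) :=
      mul_le_mul_of_nonneg_left (hlowQ v) (le_of_lt (hq i0))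
    have h4 : q i0 * (v ⬝ᵥ Q.mulVec v) ≤ q i * (v ⬝ᵥ Q.mulVec v) :=
      mul_le_mul_of_nonneg_right (hi0 i) (hQpsd v)
    linarith
  -- the weighted bilinear form
  set bip : (Fin N × Fin n → ℝ) → (Fin N × Fin n → ℝ) → ℝ :=
    fun u v => Rop R u ⬝ᵥ Rop R v with hbipdef
  have hbip_blocks : ∀ u v, bip u v
      = ∑ i, (fun a => u (i,a)) ⬝ᵥ C.mulVec (fun a => v (i,a)) := by
    intro u v
    simp only [hbipdef]
    rw [Rop_dot]
    exact Finset.sum_congr rfl fun i _ => mann_sqrt_dot R C hRsym hRR _ _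
  have hbip_nonneg : ∀ u, 0 ≤ bip u u := fun u => mann_dot_self_nonneg _
  have hbip_low : ∀ u, aC * (u ⬝ᵥ u) ≤ bip u u := by
    intro u
    rw [hbip_blocks, mann_dot_blocks u u, Finset.mul_sum]
    exact Finset.sum_le_sum fun i _ => hlowC _
  have hbip_up : ∀ u, bip u u ≤ bC * (u ⬝ᵥ u) := by
    intro u
    rw [hbip_blocks, mann_dot_blocks u u, Finset.mul_sum]
    exact Finset.sum_le_sum fun i _ => hupC _
  -- the half-aggregation map
  set Bm : (Fin N × Fin n → ℝ) → (Fin N × Fin n → ℝ) := halfAgg P m xstar with hBmdef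
  have hBm : ∀ z, Bm z = Kop S (extMap xstar (Kop S z)) := by
    intro z
    show halfAgg P m xstar z = _
    unfold halfAgg
    rw [kron_one_mulVec, kron_one_mulVec]
  -- dissipativity
  have hdis : ∀ z1 z2, bip (Bm z1 - Bm z2) (z1 - z2)
      ≤ -(δ * bip (Bm z1 - Bm z2) (Bm z1 - Bm z2)) := by
    intro z1 z2
    set Δx := extMap xstar (Kop S z1) - extMap xstar (Kop S z2) with hΔx
    have hBdiff : Bm z1 - Bm z2 = Kop S Δx := by
      rw [hBm z1, hBm z2, hΔx, Kop_sub]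
    have had : bip (Kop S Δx) (z1 - z2) = bip Δx (Kop S (z1 - z2)) := by
      simp only [hbipdef]
      rw [Rop_Kop_comm, Kop_dot_adj S hSsym, Rop_Kop_comm]
    have hA : bip Δx (Kop S (z1 - z2)) ≤ -(δ * bip Δx Δx) := by
      rw [hbip_blocks, hbip_blocks]
      have hper : ∀ i : Fin N,
          (fun a => Δx (i,a)) ⬝ᵥ C.mulVec (fun a => Kop S (z1 - z2) (i,a))
          ≤ -(δ * ((fun a => Δx (i,a)) ⬝ᵥ C.mulVec (fun a => Δx (i,a)))) := by
        intro i
        have hxblock : (fun a => Δx (i,a))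
            = xstar i (fun a => Kop S z1 (i,a)) - xstar i (fun a => Kop S z2 (i,a)) := by
          funext a; simp only [hΔx, Pi.sub_apply]; rfl
        have hwblock : (fun a => Kop S (z1 - z2) (i,a))
            = (fun a => Kop S z1 (i,a)) - (fun a => Kop S z2 (i,a)) := by
          rw [Kop_sub]; rfl
        rw [hxblock, hwblock]
        have hmono := optResp_monotone (X i) (hXconv i) Q C hQsym hQpsd (q i) (hq i)
          (c i) (xstar i) (hxstar i) (fun a => Kop S z1 (i,a)) (fun a => Kop S z2 (i,a))
        have hkey := hδkey i
          (xstar i (fun a => Kop S z1 (i,a)) - xstar i (fun a => Kop S z2 (i,a)))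
        have : (fun a => Kop S z1 (i,a)) - (fun a => Kop S z2 (i,a))
            = (fun a => Kop S z1 (i,a) - Kop S z2 (i,a)) := rfl
        linarith
      calc ∑ i, (fun a => Δx (i,a)) ⬝ᵥ C.mulVec (fun a => Kop S (z1 - z2) (i,a))
          ≤ ∑ i, -(δ * ((fun a => Δx (i,a)) ⬝ᵥ C.mulVec (fun a => Δx (i,a)))) :=
            Finset.sum_le_sum fun i _ => hper i
        _ = -(δ * ∑ i, (fun a => Δx (i,a)) ⬝ᵥ C.mulVec (fun a => Δx (i,a))) := by
            rw [Finset.sum_neg_distrib, Finset.mul_sum]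
    have hKle : bip (Kop S Δx) (Kop S Δx) ≤ bip Δx Δx := by
      simp only [hbipdef]
      rw [Rop_Kop_comm]
      exact Kop_dot_self_le S hSnn hSrow hScol _
    rw [hBdiff]
    have hmul := mul_le_mul_of_nonneg_left hKle (le_of_lt hδ)
    linarith [had, hA, mul_le_mul_of_nonneg_left hKle (le_of_lt hδ)]
  -- one Mann/Krasnoselskii step contracts in the weighted norm
  have hstep : ∀ (t : ℝ) (z1 z2 : Fin N × Fin n → ℝ), 0 ≤ t → t ≤ 1 →
      t ≤ 2 * (1 - t) * δ →
      bip (((1 - t) • z1 + t • Bm z1) - ((1 - t) • z2 + t • Bm z2))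
          (((1 - t) • z1 + t • Bm z1) - ((1 - t) • z2 + t • Bm z2))
        ≤ (1 - t) ^ 2 * bip (z1 - z2) (z1 - z2) := by
    intro t z1 z2 ht0 ht1 htc
    have hcomb : ((1 - t) • z1 + t • Bm z1) - ((1 - t) • z2 + t • Bm z2)
        = (1 - t) • (z1 - z2) + t • (Bm z1 - Bm z2) := by
      rw [smul_sub, smul_sub]; abel
    rw [hcomb]
    simp only [hbipdef]
    rw [Rop_add, Rop_smul, Rop_smul]
    have hdis' : Rop R (Bm z1 - Bm z2) ⬝ᵥ Rop R (z1 - z2)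
        ≤ -(δ * (Rop R (Bm z1 - Bm z2) ⬝ᵥ Rop R (Bm z1 - Bm z2))) := by
      have := hdis z1 z2
      simpa only [hbipdef] using this
    exact mann_contract_step (Rop R (z1 - z2)) (Rop R (Bm z1 - Bm z2)) t δ ht0 ht1
      (le_of_lt hδ) htc hdis'
  -- choice of the fixed step size
  have h12 : (0:ℝ) < 1 + 2 * δ := by linarith
  set tstar := δ / (1 + 2 * δ) with htsdef
  have hts0 : 0 < tstar := div_pos hδ h12
  have hts1 : tstar < 1 := (div_lt_one h12).mpr (by linarith)
  have htsc : tstar ≤ 2 * (1 - tstar) * δ := by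
    have h1mt : 1 - tstar = (1 + δ) / (1 + 2 * δ) := by
      rw [htsdef, eq_div_iff (ne_of_gt h12), sub_mul, div_mul_cancel₀ _ (ne_of_gt h12)]
      ring
    rw [h1mt, htsdef]
    have heq : 2 * ((1 + δ) / (1 + 2 * δ)) * δ = (2 * (1 + δ) * δ) / (1 + 2 * δ) := by
      ring
    rw [heq, div_le_div_iff₀ h12 h12]
    nlinarith [hδ, mul_pos (mul_pos hδ h12) h12, mul_pos hδ h12]
  -- the auxiliary contraction
  set G : (Fin N × Fin n → ℝ) → (Fin N × Fin n → ℝ) :=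
    fun z => (1 - tstar) • z + tstar • Bm z with hGdef
  have hG : ∀ z1 z2, bip (G z1 - G z2) (G z1 - G z2)
      ≤ (1 - tstar) ^ 2 * bip (z1 - z2) (z1 - z2) := by
    intro z1 z2
    simpa only [hGdef] using hstep tstar z1 z2 (le_of_lt hts0) (le_of_lt hts1) htsc
  have hGiter : ∀ (k : ℕ) (z1 z2 : Fin N × Fin n → ℝ),
      bip (G^[k] z1 - G^[k] z2) (G^[k] z1 - G^[k] z2)
        ≤ ((1 - tstar) ^ 2) ^ k * bip (z1 - z2) (z1 - z2) := by
    intro k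
    induction k with
    | zero => intro z1 z2; simp
    | succ k ih =>
      intro z1 z2
      rw [Function.iterate_succ_apply', Function.iterate_succ_apply']
      calc bip (G (G^[k] z1) - G (G^[k] z2)) (G (G^[k] z1) - G (G^[k] z2))
          ≤ (1 - tstar) ^ 2 * bip (G^[k] z1 - G^[k] z2) (G^[k] z1 - G^[k] z2) := hG _ _
        _ ≤ (1 - tstar) ^ 2 * (((1 - tstar) ^ 2) ^ k * bip (z1 - z2) (z1 - z2)) :=
            mul_le_mul_of_nonneg_left (ih z1 z2) (sq_nonneg _)
        _ = ((1 - tstar) ^ 2) ^ (k+1) * bip (z1 - z2) (z1 - z2) := by ring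
  -- pick an iterate that is a metric contraction
  have hcard : (0:ℝ) < (Fintype.card (Fin N × Fin n) : ℝ) := by
    have : 0 < Fintype.card (Fin N × Fin n) := by
      simp only [Fintype.card_prod, Fintype.card_fin]
      positivity
    exact_mod_cast this
  have hbase1 : (1 - tstar) ^ 2 < 1 := by nlinarith
  obtain ⟨M, hM⟩ := exists_pow_lt_of_lt_one
    (show (0:ℝ) < aC / (bC * (Fintype.card (Fin N × Fin n) : ℝ)) from by positivity) hbase1
  set κsq := (bC * (Fintype.card (Fin N × Fin n) : ℝ) / aC) * ((1 - tstar) ^ 2) ^ M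
    with hκdef
  have hκsq0 : 0 ≤ κsq := by positivity
  have hκsq1 : κsq < 1 := by
    calc κsq < (bC * (Fintype.card (Fin N × Fin n) : ℝ) / aC)
          * (aC / (bC * (Fintype.card (Fin N × Fin n) : ℝ))) := by
          exact mul_lt_mul_of_pos_left hM (by positivity)
      _ = 1 := by field_simp
  have hnormM : ∀ x y : Fin N × Fin n → ℝ,
      ‖G^[M] x - G^[M] y‖ ≤ Real.sqrt κsq * ‖x - y‖ := by
    intro x y
    have e1 := mann_norm_sq_le_dot (G^[M] x - G^[M] y)
    have e2 := hbip_low (G^[M] x - G^[M] y)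
    have e3 := hGiter M x y
    have e4 := hbip_up (x - y)
    have e5 := mann_dot_le_card_norm_sq (x - y)
    have c1 : aC * ‖G^[M] x - G^[M] y‖ ^ 2 ≤ bip (G^[M] x - G^[M] y) (G^[M] x - G^[M] y) :=
      le_trans (mul_le_mul_of_nonneg_left e1 haC.le) e2
    have c2 : bip (G^[M] x - G^[M] y) (G^[M] x - G^[M] y)
        ≤ ((1 - tstar) ^ 2) ^ M * (bC * ((Fintype.card (Fin N × Fin n) : ℝ) * ‖x - y‖ ^ 2)) := by
      refine le_trans e3 (mul_le_mul_of_nonneg_left ?_ (by positivity))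
      exact le_trans e4 (mul_le_mul_of_nonneg_left e5 hbC.le)
    have h1 : ‖G^[M] x - G^[M] y‖ ^ 2 ≤ κsq * ‖x - y‖ ^ 2 := by
      rw [hκdef, div_mul_eq_mul_div, div_mul_eq_mul_div, le_div_iff₀ haC]
      nlinarith [c1, c2]
    have h2 := Real.sqrt_le_sqrt h1
    rwa [Real.sqrt_mul hκsq0, Real.sqrt_sq (norm_nonneg _), Real.sqrt_sq (norm_nonneg _)] at h2
  set κ := Real.sqrt κsq with hκ
  have hκ0 : 0 ≤ κ := Real.sqrt_nonneg _
  have hκ1 : κ < 1 := by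
    rw [hκ, show (1:ℝ) = Real.sqrt 1 by simp]
    exact Real.sqrt_lt_sqrt hκsq0 hκsq1
  have hlip : LipschitzWith κ.toNNReal (G^[M]) :=
    LipschitzWith.of_dist_le_mul fun x y => by
      rw [dist_eq_norm, dist_eq_norm, Real.coe_toNNReal κ hκ0]
      exact hnormM x y
  have hCW : ContractingWith κ.toNNReal (G^[M]) := by
    constructor
    · have : (κ.toNNReal : ℝ) < 1 := by rw [Real.coe_toNNReal κ hκ0]; exact hκ1
      exact_mod_cast this
    · exact hlip
  haveI : Nonempty (Fin N × Fin n → ℝ) := ⟨0⟩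
  set zfix := ContractingWith.fixedPoint (G^[M]) hCW with hzfixdef
  have hfixM : Function.IsFixedPt (G^[M]) zfix := hCW.fixedPoint_isFixedPt
  have hGfix : G zfix = zfix := by
    have h1 : Function.IsFixedPt (G^[M]) (G zfix) := by
      show G^[M] (G zfix) = G zfix
      rw [← Function.iterate_succ_apply, Function.iterate_succ_apply',
        show G^[M] zfix = zfix from hfixM]
    exact hCW.fixedPoint_unique' h1 hfixM
  have hBfix : Bm zfix = zfix := by
    have h : (1 - tstar) • zfix + tstar • Bm zfix = zfix := hGfix
    have h2 : tstar • Bm zfix = tstar • zfix := by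
      have h3 : (1 - tstar) • zfix + tstar • Bm zfix
          = (1 - tstar) • zfix + tstar • zfix := by
        rw [h, sub_smul, one_smul]; abel
      exact add_left_cancel h3
    exact smul_right_injective _ (ne_of_gt hts0) h2
  -- the Mann iteration error
  set e : ℕ → ℝ := fun k => bip (zseq k - zfix) (zseq k - zfix) with hedef
  have hstepk : ∀ k, α k ≤ tstar → e (k+1) ≤ (1 - α k) ^ 2 * e k := by
    intro k hk
    have hα0 := (hα1 k).1
    have hα1' := (hα1 k).2
    have hc : α k ≤ 2 * (1 - α k) * δ := by
      have h5 : α k * (1 + 2 * δ) ≤ δ := by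
        rw [htsdef] at hk
        exact (le_div_iff₀ h12).mp hk
      linarith only [h5, hδ, hα0]
    have hzfv : (1 - α k) • zfix + α k • Bm zfix = zfix := by
      rw [hBfix, sub_smul, one_smul]; abel
    have hrw : zseq (k+1) - zfix
        = ((1 - α k) • zseq k + α k • Bm (zseq k)) - ((1 - α k) • zfix + α k • Bm zfix) := by
      rw [hrec k, hzfv]
    simp only [hedef]
    rw [hrw]
    exact hstep (α k) (zseq k) zfix hα0.le hα1'.le hc
  obtain ⟨K0, hK0⟩ := Filter.eventually_atTop.mp (hα2.eventually (gt_mem_nhds hts0))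
  have hbound : ∀ k, K0 ≤ k → e k ≤ e K0 * ∏ j ∈ Finset.Ico K0 k, (1 - α j) ^ 2 := by
    intro k hk
    induction k, hk using Nat.le_induction with
    | base => simp
    | succ k hk ih =>
      calc e (k+1) ≤ (1 - α k) ^ 2 * e k := hstepk k (le_of_lt (hK0 k hk))
        _ ≤ (1 - α k) ^ 2 * (e K0 * ∏ j ∈ Finset.Ico K0 k, (1 - α j) ^ 2) :=
            mul_le_mul_of_nonneg_left ih (sq_nonneg _)
        _ = e K0 * ∏ j ∈ Finset.Ico K0 (k+1), (1 - α j) ^ 2 := by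
            rw [Finset.prod_Ico_succ_top hk]; ring
  have hprodle : ∀ k, (∏ j ∈ Finset.Ico K0 k, (1 - α j) ^ 2)
      ≤ Real.exp (-(∑ j ∈ Finset.Ico K0 k, α j)) := by
    intro k
    calc (∏ j ∈ Finset.Ico K0 k, (1 - α j) ^ 2)
        ≤ ∏ j ∈ Finset.Ico K0 k, Real.exp (-(α j)) := by
          refine Finset.prod_le_prod (fun j _ => sq_nonneg _) fun j _ => ?_
          have hj0 := (hα1 j).1
          have hj1 := (hα1 j).2
          have h1 : (1 - α j) ^ 2 ≤ 1 - α j := by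
            have h0 : 0 ≤ 1 - α j := by linarith only [hj1]
            calc (1 - α j) ^ 2 = (1 - α j) * (1 - α j) := sq (1 - α j)
              _ ≤ 1 * (1 - α j) := mul_le_mul_of_nonneg_right (by linarith only [hj0]) h0
              _ = 1 - α j := one_mul _
          have h2 : 1 - α j ≤ Real.exp (-(α j)) := by
            have h3 := Real.add_one_le_exp (-(α j)); linarith only [h3]
          linarith only [h1, h2]
      _ = Real.exp (-(∑ j ∈ Finset.Ico K0 k, α j)) := by
          rw [← Real.exp_sum]
          congr 1
          rw [Finset.sum_neg_distrib]
  have hsum : Tendsto (fun k => ∑ j ∈ Finset.Ico K0 k, α j) atTop atTop := by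
    have h1 : Tendsto (fun k => (∑ j ∈ Finset.range k, α j)
        + -(∑ j ∈ Finset.range K0, α j)) atTop atTop :=
      tendsto_atTop_add_const_right _ _ hα3
    apply h1.congr'
    filter_upwards [eventually_ge_atTop K0] with k hk
    rw [Finset.sum_Ico_eq_sub _ hk, sub_eq_add_neg]
  have hexp0 : Tendsto (fun k => Real.exp (-(∑ j ∈ Finset.Ico K0 k, α j))) atTop (𝓝 0) :=
    Real.tendsto_exp_atBot.comp (tendsto_neg_atBot_iff.mpr hsum)
  have he0 : Tendsto e atTop (𝓝 0) := by
    have hg0 : Tendsto (fun k => e K0 * Real.exp (-(∑ j ∈ Finset.Ico K0 k, α j)))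
        atTop (𝓝 0) := by
      simpa using tendsto_const_nhds.mul hexp0
    refine squeeze_zero' (Filter.Eventually.of_forall fun k => hbip_nonneg _) ?_ hg0
    filter_upwards [eventually_ge_atTop K0] with k hk
    calc e k ≤ e K0 * ∏ j ∈ Finset.Ico K0 k, (1 - α j) ^ 2 := hbound k hk
      _ ≤ e K0 * Real.exp (-(∑ j ∈ Finset.Ico K0 k, α j)) :=
          mul_le_mul_of_nonneg_left (hprodle k) (hbip_nonneg _)
  have hzconv : Tendsto zseq atTop (𝓝 zfix) := by
    rw [tendsto_iff_norm_sub_tendsto_zero]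
    have hle : ∀ k, ‖zseq k - zfix‖ ≤ Real.sqrt (e k / aC) := by
      intro k
      have h1 : ‖zseq k - zfix‖ ^ 2 ≤ e k / aC := by
        have e1 := mann_norm_sq_le_dot (zseq k - zfix)
        have e2 := hbip_low (zseq k - zfix)
        simp only [hedef]
        rw [le_div_iff₀ haC]
        have e1' : ‖zseq k - zfix‖ ^ 2 * aC ≤ ((zseq k - zfix) ⬝ᵥ (zseq k - zfix)) * aC :=
          mul_le_mul_of_nonneg_right e1 haC.le
        linarith only [e1', e2]
      have := Real.sqrt_le_sqrt h1
      rwa [Real.sqrt_sq (norm_nonneg _)] at this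
    have hg : Tendsto (fun k => Real.sqrt (e k / aC)) atTop (𝓝 0) := by
      have hdiv : Tendsto (fun k => e k / aC) atTop (𝓝 0) := by
        have h := he0.div_const aC
        rwa [zero_div] at h
      have h2 := (Real.continuous_sqrt.tendsto 0).comp hdiv
      rwa [Real.sqrt_zero] at h2
    exact squeeze_zero (fun k => norm_nonneg _) hle hg
  -- package the answer
  refine ⟨(S ⊗ₖ (1 : Matrix (Fin n) (Fin n) ℝ)).mulVec zfix, ?_, ?_⟩
  · -- fixed point of the ν-step aggregation map
    obtain ⟨r, hr⟩ := hνeven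
    have hpow : P ^ ν = P ^ m * P ^ m := by
      have hmr : m = r := by omega
      rw [hmr, hr, ← pow_add]
    show aggMap P ν xstar _ = _
    unfold aggMap
    rw [hpow, ← hSdef]
    have hkr : (S * S) ⊗ₖ (1 : Matrix (Fin n) (Fin n) ℝ)
        = (S ⊗ₖ (1 : Matrix (Fin n) (Fin n) ℝ)) * (S ⊗ₖ (1 : Matrix (Fin n) (Fin n) ℝ)) := by
      rw [← Matrix.mul_kronecker_mul, Matrix.one_mul]
    rw [hkr, ← Matrix.mulVec_mulVec]
    have hinner : (S ⊗ₖ (1 : Matrix (Fin n) (Fin n) ℝ)).mulVec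
        (extMap xstar ((S ⊗ₖ (1 : Matrix (Fin n) (Fin n) ℝ)).mulVec zfix)) = zfix := by
      have : Bm zfix = zfix := hBfix
      rw [hBmdef] at this
      unfold halfAgg at this
      rw [← hSdef] at this
      exact this
    rw [hinner]
  · -- convergence of the aggregated estimates
    have hlin : Continuous fun v : Fin N × Fin n → ℝ =>
        (S ⊗ₖ (1 : Matrix (Fin n) (Fin n) ℝ)).mulVec v := by
      have h := LinearMap.continuous_of_finiteDimensional
        ((S ⊗ₖ (1 : Matrix (Fin n) (Fin n) ℝ)).mulVecLin)
      exact h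
    exact ((hlin.tendsto zfix).comp hzconv)
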